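/- Σ_{g ∈ G(r,n)} t^{fdes(g)} q^{fmaj(g)} = [Σ_{g ∈ G(r,p,n)} t^{fdes(g)} q^{fmaj(g)}] · (1 + t^d q^{dn} + t^{2d} q^{2dn} + ... + t^{(p-1)d} q^{(p-1)dn}), where statistics on G(r,p,n) are defined via the bijection with Γ(r,p,n). -/
import Mathlib


open Finset

namespace ColoredPerm

/-- An element of the wreath product `G(r,n) = ℤ_r ≀ S_n`: a color vector and a permutation. -/
abbrev CPerm (r n : ℕ) := (Fin n → Fin r) × Equiv.Perm (Fin n)

variable {r n : ℕ}

/-- Descent at the (0-indexed) position `j`, i.e. the paper's descent at position `j+1`: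
`γ_{j+1} ≻ γ_{j+2}` in the order where higher colors are smaller, ties by the values. -/
def isDesc (g : CPerm r n) (j : ℕ) : Prop :=
  ∃ h : j + 1 < n,
    (g.1 ⟨j, Nat.lt_of_succ_lt h⟩ < g.1 ⟨j + 1, h⟩) ∨
      (g.1 ⟨j, Nat.lt_of_succ_lt h⟩ = g.1 ⟨j + 1, h⟩ ∧
        g.2 ⟨j + 1, h⟩ < g.2 ⟨j, Nat.lt_of_succ_lt h⟩)

instance (g : CPerm r n) (j : ℕ) : Decidable (isDesc g j) := by
  unfold isDesc; exact exists_prop_decidable _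

/-- The descent set (0-indexed positions). -/
def Des (g : CPerm r n) : Finset ℕ := (Finset.range n).filter (isDesc g)

def des (g : CPerm r n) : ℕ := (Des g).card

/-- The major index: sum of the (1-indexed) descent positions. -/
def maj (g : CPerm r n) : ℕ := ∑ j ∈ Des g, (j + 1)

/-- The color weight. -/
def col (g : CPerm r n) : ℕ := ∑ i, (g.1 i : ℕ)

/-- The flag major index. -/
def fmaj (g : CPerm r n) : ℕ := r * maj g + col g

/-- `dstat g i` is the paper's `d_i(g)`: the number of (1-indexed) descents `≥ i`. -/
def dstat (g : CPerm r n) (i : ℕ) : ℕ := ((Des g).filter fun j => i ≤ j + 1).card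

/-- `fstat g i` is the paper's `f_{i+1}(g) = r·d_{i+1}(g) + c_{i+1}(g)` (0-indexed `i`). -/
def fstat (g : CPerm r n) (i : Fin n) : ℕ := r * dstat g ((i : ℕ) + 1) + (g.1 i : ℕ)

/-- The flag descent number `fdes = r·des + c_1`. -/
def fdes (g : CPerm r n) (hn : 0 < n) : ℕ := r * des g + (g.1 ⟨0, hn⟩ : ℕ)

/-- `Γ(r,p,n)`: colored permutations whose last color is `< d = r/p`. -/
def Gamma (r p n : ℕ) (hn : 0 < n) : Finset (CPerm r n) :=
  Finset.univ.filter fun g => (g.1 ⟨n - 1, Nat.sub_lt hn one_pos⟩ : ℕ) < r / p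

/-- `G(r,p,n)` as the set of colored permutations with color weight `≡ 0 (mod p)`. -/
def Hfin (r p n : ℕ) : Finset (CPerm r n) :=
  Finset.univ.filter fun g => (∑ i, (g.1 i : ℕ)) % p = 0

end ColoredPerm

namespace ColoredPerm

variable {r n : ℕ}

/-- Shift all colors by `i` modulo `r`. -/
def sh (hr : 0 < r) (i : ℕ) (g : CPerm r n) : CPerm r n :=
  ⟨fun k => ⟨((g.1 k : ℕ) + i) % r, Nat.mod_lt _ hr⟩, g.2⟩

lemma isDesc_iff (g : CPerm r n) (j : ℕ) (h : j + 1 < n) :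
    isDesc g j ↔ ((g.1 ⟨j, Nat.lt_of_succ_lt h⟩ : ℕ) < (g.1 ⟨j + 1, h⟩ : ℕ) ∨
      ((g.1 ⟨j, Nat.lt_of_succ_lt h⟩ : ℕ) = (g.1 ⟨j + 1, h⟩ : ℕ) ∧
        g.2 ⟨j + 1, h⟩ < g.2 ⟨j, Nat.lt_of_succ_lt h⟩)) := by
  constructor
  · rintro ⟨h', H | ⟨H1, H2⟩⟩
    · exact Or.inl H
    · exact Or.inr ⟨congrArg Fin.val H1, H2⟩
  · rintro (H | ⟨H1, H2⟩)
    · exact ⟨h, Or.inl H⟩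
    · exact ⟨h, Or.inr ⟨Fin.ext H1, H2⟩⟩

lemma desc_sh (hr : 0 < r) {i : ℕ} (hi : i < r) (g : CPerm r n) (j : ℕ) (h : j + 1 < n) :
    (if isDesc (sh hr i g) j then (1 : ℤ) else 0)
      = (if isDesc g j then (1 : ℤ) else 0)
        + (if r ≤ (g.1 ⟨j, Nat.lt_of_succ_lt h⟩ : ℕ) + i then 1 else 0)
        - (if r ≤ (g.1 ⟨j + 1, h⟩ : ℕ) + i then 1 else 0) := by
  have hsh2 : (sh hr i g).2 = g.2 := rfl
  have hde2 := isDesc_iff (sh hr i g) j h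
  have hde := isDesc_iff g j h
  have hv : ∀ (k : ℕ) (hk : k < n),
      ((sh hr i g).1 ⟨k, hk⟩ : ℕ) = ((g.1 ⟨k, hk⟩ : ℕ) + i) % r := fun _ _ => rfl
  rw [hv, hv, hsh2] at hde2
  set a := (g.1 ⟨j, Nat.lt_of_succ_lt h⟩ : ℕ) with ha'
  set b := (g.1 ⟨j + 1, h⟩ : ℕ) with hb'
  have ha : a < r := (g.1 _).isLt
  have hb : b < r := (g.1 _).isLt
  have hmod : ∀ c : ℕ, c < r → (r ≤ c + i → (c + i) % r = c + i - r) ∧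
      (c + i < r → (c + i) % r = c + i) := by
    intro c hc
    refine ⟨fun hw => ?_, fun hw => Nat.mod_eq_of_lt hw⟩
    rw [Nat.mod_eq_sub_mod hw, Nat.mod_eq_of_lt (by omega)]
  by_cases hP : g.2 ⟨j + 1, h⟩ < g.2 ⟨j, Nat.lt_of_succ_lt h⟩ <;>
    by_cases wa : r ≤ a + i <;> by_cases wb : r ≤ b + i <;>
    [rw [(hmod a ha).1 wa, (hmod b hb).1 wb] at hde2;
     rw [(hmod a ha).1 wa, (hmod b hb).2 (by omega)] at hde2;
     rw [(hmod a ha).2 (by omega), (hmod b hb).1 wb] at hde2;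
     rw [(hmod a ha).2 (by omega), (hmod b hb).2 (by omega)] at hde2;
     rw [(hmod a ha).1 wa, (hmod b hb).1 wb] at hde2;
     rw [(hmod a ha).1 wa, (hmod b hb).2 (by omega)] at hde2;
     rw [(hmod a ha).2 (by omega), (hmod b hb).1 wb] at hde2;
     rw [(hmod a ha).2 (by omega), (hmod b hb).2 (by omega)] at hde2] <;>
    simp only [hde2, hde, hP, and_true, and_false, or_false] <;>
    split_ifs <;> omega

/-- Telescoping. -/
lemma tele (W : ℕ → ℤ) (a b : ℕ) (hab : a ≤ b) :
    ∑ j ∈ Finset.Ico a b, (W j - W (j + 1)) = W a - W b := by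
  induction b, hab using Nat.le_induction with
  | base => simp
  | succ b hab ih => rw [Finset.sum_Ico_succ_top hab, ih]; ring

lemma dstat_eq_sum (g : CPerm r n) (k : ℕ) :
    (dstat g (k + 1) : ℤ) = ∑ j ∈ Finset.Ico k (n - 1), (if isDesc g j then (1 : ℤ) else 0) := by
  have hsets : (Des g).filter (fun j => k + 1 ≤ j + 1) = (Finset.Ico k (n - 1)).filter (isDesc g) := by
    ext j
    simp only [Des, mem_filter, mem_range, Finset.mem_Ico]
    constructor
    · rintro ⟨⟨hj, hd⟩, hkj⟩
      obtain ⟨h', H⟩ := hd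
      exact ⟨⟨by omega, by omega⟩, ⟨h', H⟩⟩
    · rintro ⟨⟨h1, h2⟩, hd⟩
      exact ⟨⟨by omega, hd⟩, by omega⟩
  rw [dstat, hsets, card_filter]
  push_cast
  simp

lemma dstat_sh (hr : 0 < r) (hn : 0 < n) {i : ℕ} (hi : i < r) (g : CPerm r n)
    (hlast : (g.1 ⟨n - 1, Nat.sub_lt hn one_pos⟩ : ℕ) + i < r)
    (k : ℕ) (hk : k < n) :
    (dstat (sh hr i g) (k + 1) : ℤ)
      = dstat g (k + 1) + (if r ≤ (g.1 ⟨k, hk⟩ : ℕ) + i then 1 else 0) := by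
  classical
  set W : ℕ → ℤ := fun j => if hj : j < n then (if r ≤ (g.1 ⟨j, hj⟩ : ℕ) + i then 1 else 0) else 0
    with hW
  have hWn : W (n - 1) = 0 := by
    rw [hW]
    simp only [dif_pos (Nat.sub_lt hn one_pos)]
    rw [if_neg (by omega)]
  have step : ∀ j ∈ Finset.Ico k (n - 1),
      (if isDesc (sh hr i g) j then (1 : ℤ) else 0)
        = (if isDesc g j then (1 : ℤ) else 0) + (W j - W (j + 1)) := by
    intro j hj
    rw [Finset.mem_Ico] at hj
    have h1 : j + 1 < n := by omega
    rw [desc_sh hr hi g j h1, hW]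
    simp only [dif_pos (Nat.lt_of_succ_lt h1), dif_pos h1]
    ring
  rw [dstat_eq_sum, dstat_eq_sum, Finset.sum_congr rfl step, Finset.sum_add_distrib,
    tele W k (n - 1) (by omega), hWn, hW]
  simp only [dif_pos hk]
  ring

lemma fstat_sh (hr : 0 < r) (hn : 0 < n) {i : ℕ} (hi : i < r) (g : CPerm r n)
    (hlast : (g.1 ⟨n - 1, Nat.sub_lt hn one_pos⟩ : ℕ) + i < r) (k : Fin n) :
    fstat (sh hr i g) k = fstat g k + i := by
  have hd := dstat_sh hr hn hi g hlast k k.isLt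
  have hc : ((sh hr i g).1 k : ℕ) = ((g.1 k : ℕ) + i) % r := by
    show (((g.1 ⟨k, k.isLt⟩ : ℕ) + i) % r) = _
    congr
  have hck : g.1 ⟨(k : ℕ), k.isLt⟩ = g.1 k := by congr
  rw [hck] at hd
  have hcr : (g.1 k : ℕ) < r := (g.1 k).isLt
  unfold fstat
  rw [hc]
  by_cases w : r ≤ (g.1 k : ℕ) + i
  · rw [if_pos w] at hd
    have hd' : dstat (sh hr i g) ((k : ℕ) + 1) = dstat g ((k : ℕ) + 1) + 1 := by
      exact_mod_cast hd
    have hm : ((g.1 k : ℕ) + i) % r = (g.1 k : ℕ) + i - r := by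
      rw [Nat.mod_eq_sub_mod w, Nat.mod_eq_of_lt (by omega)]
    rw [hd', hm, Nat.mul_add, Nat.mul_one]
    omega
  · rw [if_neg w] at hd
    have hd' : dstat (sh hr i g) ((k : ℕ) + 1) = dstat g ((k : ℕ) + 1) := by
      exact_mod_cast hd
    have hm : ((g.1 k : ℕ) + i) % r = (g.1 k : ℕ) + i := Nat.mod_eq_of_lt (by omega)
    rw [hd', hm]
    omega

lemma des_eq_dstat (g : CPerm r n) : des g = dstat g 1 := by
  unfold des dstat
  rw [Finset.filter_true_of_mem (fun j _ => by omega)]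

lemma fdes_eq_fstat (g : CPerm r n) (hn : 0 < n) : fdes g hn = fstat g ⟨0, hn⟩ := by
  unfold fdes fstat
  rw [des_eq_dstat]

lemma maj_eq_sum (g : CPerm r n) : maj g = ∑ k ∈ Finset.range n, dstat g (k + 1) := by
  unfold maj dstat
  simp_rw [card_filter]
  rw [Finset.sum_comm]
  refine Finset.sum_congr rfl fun j hj => ?_
  have hjn : j + 1 ≤ n := by
    obtain ⟨h', -⟩ := (mem_filter.mp hj).2
    omega
  rw [← card_filter]
  have : (Finset.range n).filter (fun k => k + 1 ≤ j + 1) = Finset.range (j + 1) := by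
    ext k; simp only [mem_filter, mem_range]; omega
  rw [this, card_range]

lemma fmaj_eq_sum_fstat (g : CPerm r n) : fmaj g = ∑ k : Fin n, fstat g k := by
  unfold fmaj fstat
  rw [Finset.sum_add_distrib, ← Finset.mul_sum, maj_eq_sum]
  congr 1
  rw [Fin.sum_univ_eq_sum_range (fun k => dstat g (k + 1))]

lemma fdes_sh (hr : 0 < r) (hn : 0 < n) {i : ℕ} (hi : i < r) (g : CPerm r n)
    (hlast : (g.1 ⟨n - 1, Nat.sub_lt hn one_pos⟩ : ℕ) + i < r) :
    fdes (sh hr i g) hn = fdes g hn + i := by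
  rw [fdes_eq_fstat, fdes_eq_fstat, fstat_sh hr hn hi g hlast]

lemma fmaj_sh (hr : 0 < r) (hn : 0 < n) {i : ℕ} (hi : i < r) (g : CPerm r n)
    (hlast : (g.1 ⟨n - 1, Nat.sub_lt hn one_pos⟩ : ℕ) + i < r) :
    fmaj (sh hr i g) = fmaj g + n * i := by
  rw [fmaj_eq_sum_fstat, fmaj_eq_sum_fstat]
  have : ∀ k : Fin n, fstat (sh hr i g) k = fstat g k + i :=
    fun k => fstat_sh hr hn hi g hlast k
  rw [Finset.sum_congr rfl (fun k _ => this k), Finset.sum_add_distrib]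
  simp [Finset.card_univ, mul_comm]

lemma sh_sh (hr : 0 < r) (a b : ℕ) (g : CPerm r n) :
    sh hr a (sh hr b g) = sh hr (b + a) g := by
  unfold sh
  refine Prod.ext ?_ rfl
  funext k
  apply Fin.ext
  show (((g.1 k : ℕ) + b) % r + a) % r = ((g.1 k : ℕ) + (b + a)) % r
  rw [Nat.mod_add_mod, Nat.add_assoc]

lemma sh_r (hr : 0 < r) (g : CPerm r n) : sh hr r g = g := by
  unfold sh
  refine Prod.ext ?_ rfl
  funext k
  apply Fin.ext
  show ((g.1 k : ℕ) + r) % r = (g.1 k : ℕ)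
  rw [Nat.add_mod_right, Nat.mod_eq_of_lt (g.1 k).isLt]

end ColoredPerm

open ColoredPerm MvPolynomial in
/-- With `q = X 0`, `t = X 1` and `d = r/p`,
`Σ_{g ∈ G(r,n)} t^{fdes g} q^{fmaj g}
  = (Σ_{g ∈ G(r,p,n)} t^{fdes g} q^{fmaj g}) · Σ_{i=0}^{p-1} t^{d i} q^{d i n}`,
where the statistics on `G(r,p,n)` are transported along the bijection with `Γ(r,p,n)`. -/
theorem sum_G_eq_sum_H_mul (r p n : ℕ) (hr : 0 < r) (hp : 0 < p) (hn : 0 < n) (hpr : p ∣ r) :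
    ∑ g : CPerm r n, (X 1 : MvPolynomial (Fin 2) ℤ) ^ fdes g hn * X 0 ^ fmaj g =
      (∑ γ ∈ Gamma r p n hn, (X 1 : MvPolynomial (Fin 2) ℤ) ^ fdes γ hn * X 0 ^ fmaj γ) *
        ∑ i ∈ Finset.range p, (X 1 : MvPolynomial (Fin 2) ℤ) ^ (r / p * i) *
          X 0 ^ (r / p * i * n) := by
  classical
  set d := r / p with hd'
  have hdp : d * p = r := Nat.div_mul_cancel hpr
  have hd0 : 0 < d := by
    rcases Nat.eq_zero_or_pos d with h0 | h0
    · rw [h0, zero_mul] at hdp; omega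
    · exact h0
  have hL : ∀ (g : CPerm r n) (i : ℕ),
      ((sh hr i g).1 ⟨n - 1, Nat.sub_lt hn one_pos⟩ : ℕ)
        = ((g.1 ⟨n - 1, Nat.sub_lt hn one_pos⟩ : ℕ) + i) % r := fun _ _ => rfl
  have hlt : ∀ (γ : CPerm r n), γ ∈ Gamma r p n hn → ∀ m ∈ Finset.range p,
      (γ.1 ⟨n - 1, Nat.sub_lt hn one_pos⟩ : ℕ) + d * m < r := by
    intro γ hγ m hm
    rw [Gamma, Finset.mem_filter] at hγ
    rw [Finset.mem_range] at hm
    have h1 : d * (m + 1) ≤ d * p := Nat.mul_le_mul_left d (by omega)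
    have h2 : d * (m + 1) = d * m + d := by ring
    have h3 := hγ.2
    omega
  have key : ∑ x ∈ (Gamma r p n hn) ×ˢ (Finset.range p),
      (((X 1 : MvPolynomial (Fin 2) ℤ) ^ fdes x.1 hn * X 0 ^ fmaj x.1) *
        (X 1 ^ (d * x.2) * X 0 ^ (d * x.2 * n)))
      = ∑ g : CPerm r n, (X 1 : MvPolynomial (Fin 2) ℤ) ^ fdes g hn * X 0 ^ fmaj g := by
    refine Finset.sum_nbij' (fun x => sh hr (d * x.2) x.1)
      (fun g => (sh hr (r - d * ((g.1 ⟨n - 1, Nat.sub_lt hn one_pos⟩ : ℕ) / d)) g,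
        (g.1 ⟨n - 1, Nat.sub_lt hn one_pos⟩ : ℕ) / d))
      (fun _ _ => Finset.mem_univ _) ?_ ?_ ?_ ?_
    · -- backward map lands in the product
      intro g _
      set c := (g.1 ⟨n - 1, Nat.sub_lt hn one_pos⟩ : ℕ) with hc
      have f3 : c < r := (g.1 _).isLt
      set m := c / d with hm
      have f1 : d * m + c % d = c := by rw [hm]; exact Nat.div_add_mod c d
      have f2 : c % d < d := Nat.mod_lt _ hd0
      set dm := d * m with hdmd
      rw [Finset.mem_product, Finset.mem_range]
      constructor
      · rw [Gamma, Finset.mem_filter]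
        refine ⟨Finset.mem_univ _, ?_⟩
        rw [hL]
        rw [← hc]
        have e1 : c + (r - dm) = (c % d) + r := by omega
        rw [e1, Nat.add_mod_right, Nat.mod_eq_of_lt (by omega)]
        omega
      · show c / d < p
        refine (Nat.div_lt_iff_lt_mul hd0).2 ?_
        have : p * d = r := by rw [mul_comm]; exact hdp
        omega
    · -- left inverse
      rintro ⟨γ, m⟩ hx
      rw [Finset.mem_product] at hx
      have hγd : (γ.1 ⟨n - 1, Nat.sub_lt hn one_pos⟩ : ℕ) < d := by
        have := hx.1; rw [Gamma, Finset.mem_filter] at this; exact this.2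
      have hlt' := hlt γ hx.1 m hx.2
      have hLs : ((sh hr (d * m) γ).1 ⟨n - 1, Nat.sub_lt hn one_pos⟩ : ℕ)
          = (γ.1 ⟨n - 1, Nat.sub_lt hn one_pos⟩ : ℕ) + d * m := by
        rw [hL, Nat.mod_eq_of_lt hlt']
      have hdiv : ((γ.1 ⟨n - 1, Nat.sub_lt hn one_pos⟩ : ℕ) + d * m) / d = m := by
        rw [Nat.add_mul_div_left _ _ hd0, Nat.div_eq_of_lt hγd, Nat.zero_add]
      simp only [hLs, hdiv]
      rw [sh_sh, Prod.mk.injEq]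
      have e2 : d * m + (r - d * m) = r := by omega
      rw [e2, sh_r]
      exact ⟨rfl, rfl⟩
    · -- right inverse
      intro g _
      set c := (g.1 ⟨n - 1, Nat.sub_lt hn one_pos⟩ : ℕ) with hc
      have f3 : c < r := (g.1 _).isLt
      set m := c / d with hm
      have f1 : d * m + c % d = c := by rw [hm]; exact Nat.div_add_mod c d
      have f2 : c % d < d := Nat.mod_lt _ hd0
      set dm := d * m with hdmd
      simp only
      rw [sh_sh]
      have e2 : r - dm + dm = r := by omega
      rw [e2, sh_r]
    · -- the statistic
      rintro ⟨γ, m⟩ hx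
      rw [Finset.mem_product] at hx
      have hlt' := hlt γ hx.1 m hx.2
      have hi : d * m < r := by omega
      rw [fdes_sh hr hn hi γ hlt', fmaj_sh hr hn hi γ hlt']
      have e3 : n * (d * m) = d * m * n := by ring
      rw [e3, pow_add, pow_add]
      ring
  rw [← key, Finset.sum_product, Finset.sum_mul_sum]
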